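/- Let f(x) = 1 + ax + bx² + x³ over ℤ[a,b, 1/disc(f)] where disc(f) = −4(a³+b³) + a²b² + 18ab − 27, and consider the connection ∇ on H' = (R[x]/(f))/R·1 ≅ R·x ⊕ R·x² induced by implicit differentiation of f(x)=0 in a. Then in the basis (x, x²), ∇_{d/da} is given by the matrix (1/disc(f))·[[ab²−3b−2a², 4b²−2a²b+6a],[ab−9, 12b−4a²]], i.e. ∇_{d/da}(x) = (1/disc(f))((ab²−3b−2a²)x + (ab−9)x²) and ∇_{d/da}(x²) = (1/disc(f))((4b²−2a²b+6a)x + (12b−4a²)x²) in H'. -/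

import Mathlib

/-! STATEMENT 18: the Gauss–Manin connection computation for the cubic
`f(x) = 1 + a x + b x² + x³` over `R = ℤ[a,b][1/disc]` (modelled as any localization
of `ℤ[a,b]` away from `disc`).  With `H = R[x]/(f)` and `H' = H / R·1`, the connection
is determined by `∇_{d/da}(x^m) = −m·x^m·B(x)/disc mod f`, where `A₀·f + B·f' = disc`.
The claim is `∇_{d/da}(x) = (1/disc)·((ab²−3b−2a²)·x + (ab−9)·x²)` and
`∇_{d/da}(x²) = (1/disc)·((4b²−2a²b+6a)·x + (12b−4a²)·x²)` in `H'`. -/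

noncomputable section
open Polynomial

/-- The class in `H' = (R[x]/(f))/R·1` of a polynomial `q ∈ R[x]`. -/
def cls (Rl : Type*) [CommRing Rl] (f q : Polynomial Rl) :
    (Polynomial Rl ⧸ Ideal.span {f}) ⧸
      (Submodule.span Rl {(1 : Polynomial Rl ⧸ Ideal.span {f})}) :=
  Submodule.Quotient.mk (Ideal.Quotient.mk (Ideal.span {f}) q)

lemma smul_one_eq_mk_C (Rl : Type*) [CommRing Rl] (f : Polynomial Rl) (c : Rl) :
    c • (1 : Polynomial Rl ⧸ Ideal.span {f}) = Ideal.Quotient.mk (Ideal.span {f}) (C c) := by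
  have h1 : (1 : Polynomial Rl ⧸ Ideal.span {f}) =
      Submodule.Quotient.mk (1 : Polynomial Rl) := rfl
  rw [h1, ← Submodule.Quotient.mk_smul]
  have : c • (1 : Polynomial Rl) = C c := by rw [smul_eq_C_mul, mul_one]
  rw [this]
  rfl

lemma cls_eq_of (Rl : Type*) [CommRing Rl] (f p q : Polynomial Rl) (c : Rl) (g : Polynomial Rl)
    (h : p = q + C c + g * f) : cls Rl f p = cls Rl f q := by
  unfold cls
  rw [Submodule.Quotient.eq]
  have hfz : Ideal.Quotient.mk (Ideal.span {f}) f = 0 :=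
    Ideal.Quotient.eq_zero_iff_mem.mpr (Ideal.subset_span rfl)
  have : Ideal.Quotient.mk (Ideal.span {f}) p - Ideal.Quotient.mk (Ideal.span {f}) q
      = c • (1 : Polynomial Rl ⧸ Ideal.span {f}) := by
    rw [smul_one_eq_mk_C, h]
    simp [hfz]
  rw [this]
  exact Submodule.smul_mem _ c (Submodule.mem_span_singleton_self 1)

theorem connection_on_cubic (Rl : Type*) [CommRing Rl]
    [Algebra (MvPolynomial (Fin 2) ℤ) Rl]
    (disc : MvPolynomial (Fin 2) ℤ)
    (hdisc : disc =
      -4 * ((MvPolynomial.X 0) ^ 3 + (MvPolynomial.X 1) ^ 3) +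
        (MvPolynomial.X 0) ^ 2 * (MvPolynomial.X 1) ^ 2 +
        18 * (MvPolynomial.X 0) * (MvPolynomial.X 1) - 27)
    -- `Rl = ℤ[a,b][1/disc]`
    [IsLocalization.Away disc Rl]
    (av bv : Rl)
    (hav : av = algebraMap (MvPolynomial (Fin 2) ℤ) Rl (MvPolynomial.X 0))
    (hbv : bv = algebraMap (MvPolynomial (Fin 2) ℤ) Rl (MvPolynomial.X 1))
    -- `1/disc ∈ Rl`
    (invd : Rl) (hinvd : invd * algebraMap (MvPolynomial (Fin 2) ℤ) Rl disc = 1)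
    (f : Polynomial Rl) (hf : f = C 1 + C av * X + C bv * X ^ 2 + X ^ 3)
    -- `A₀ f + B f' = disc`, so that `1/f'(x) ≡ B(x)/disc mod f`
    (A₀ B : Polynomial Rl)
    (hAB : A₀ * f + B * derivative f = C (algebraMap (MvPolynomial (Fin 2) ℤ) Rl disc)) :
    invd • cls Rl f (-(X * B)) =
        invd • cls Rl f (C (av * bv ^ 2 - 3 * bv - 2 * av ^ 2) * X + C (av * bv - 9) * X ^ 2) ∧
      invd • cls Rl f (-(2 * X ^ 2 * B)) =
        invd • cls Rl f (C (4 * bv ^ 2 - 2 * av ^ 2 * bv + 6 * av) * X +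
          C (12 * bv - 4 * av ^ 2) * X ^ 2) := by
  set d : Rl := algebraMap (MvPolynomial (Fin 2) ℤ) Rl disc with hd
  have hdval : d = -4 * (av ^ 3 + bv ^ 3) + av ^ 2 * bv ^ 2 + 18 * av * bv - 27 := by
    rw [hd, hdisc, hav, hbv]
    simp only [map_add, map_mul, map_sub, map_pow, map_neg, map_ofNat]
  have hf' : derivative f = C av + 2 * C bv * X + 3 * X ^ 2 := by
    rw [hf]
    simp only [derivative_add, derivative_mul, derivative_C, derivative_X, derivative_pow,
      derivative_one, Nat.cast_ofNat]
    have h2 : (C (2 : Rl)) = 2 := map_ofNat C 2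
    have h3 : (C (3 : Rl)) = 3 := map_ofNat C 3
    rw [h2, h3]
    ring
  set B₀ : Polynomial Rl :=
    C (av * bv ^ 2 - 4 * av ^ 2 + 3 * bv) + C (2 * bv ^ 3 - 7 * av * bv + 9) * X +
      C (2 * bv ^ 2 - 6 * av) * X ^ 2 with hB₀
  set A₀₀ : Polynomial Rl :=
    C (15 * av * bv - 4 * bv ^ 3 - 27) + C (18 * av - 6 * bv ^ 2) * X with hA₀₀
  have hAB₀ : A₀₀ * f + B₀ * derivative f = C d := by
    rw [hA₀₀, hB₀, hf', hf, hdval]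
    simp only [map_add, map_mul, map_sub, map_pow, map_neg, map_ofNat, map_one]
    ring
  set I : Ideal (Polynomial Rl) := Ideal.span {f} with hI
  set π : Polynomial Rl →+* Polynomial Rl ⧸ I := Ideal.Quotient.mk I with hπ
  have hfz : π f = 0 := Ideal.Quotient.eq_zero_iff_mem.mpr (Ideal.subset_span rfl)
  have key : ∀ P : Polynomial Rl, ∀ Q : Polynomial Rl,
      Q * f + P * derivative f = C d → π P * π (derivative f) = π (C d) := by
    intro P Q h
    have := congrArg π h
    simpa [map_add, map_mul, hfz] using this
  have h1 : π B₀ * π (derivative f) = π (C d) := key B₀ A₀₀ hAB₀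
  have h2 : π B * π (derivative f) = π (C d) := key B A₀ hAB
  have hCd : π (C d) = d • (1 : Polynomial Rl ⧸ I) := (smul_one_eq_mk_C Rl f d).symm
  have hunit : π (derivative f) * (invd • π B₀) = 1 := by
    rw [mul_smul_comm, mul_comm, h1, hCd, smul_smul, hinvd, one_smul]
  have hB : π B = π B₀ := by
    calc π B = π B * (π (derivative f) * (invd • π B₀)) := by rw [hunit, mul_one]
    _ = (π B * π (derivative f)) * (invd • π B₀) := by ring
    _ = (π B₀ * π (derivative f)) * (invd • π B₀) := by rw [h2, h1]
    _ = π B₀ * (π (derivative f) * (invd • π B₀)) := by ring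
    _ = π B₀ := by rw [hunit, mul_one]
  have e1 : cls Rl f (-(X * B)) = cls Rl f (-(X * B₀)) := by
    unfold cls
    congr 1
    simp only [map_neg, map_mul, ← hπ, hB]
    exact congrArg (fun t => -(Ideal.Quotient.mk (Ideal.span {f}) X * t)) hB
  have e2 : cls Rl f (-(2 * X ^ 2 * B)) = cls Rl f (-(2 * X ^ 2 * B₀)) := by
    unfold cls
    congr 1
    simp only [map_neg, map_mul, ← hπ, hB]
    exact congrArg (fun t => -(Ideal.Quotient.mk (Ideal.span {f}) 2 *
      Ideal.Quotient.mk (Ideal.span {f}) (X ^ 2) * t)) hB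
  constructor
  · rw [e1]
    congr 1
    apply cls_eq_of Rl f _ _ (2 * bv ^ 2 - 6 * av) (C (6 * av - 2 * bv ^ 2))
    rw [hB₀, hf]
    simp only [map_add, map_mul, map_sub, map_pow, map_neg, map_ofNat, map_one]
    ring
  · rw [e2]
    congr 1
    apply cls_eq_of Rl f _ _ (18 - 2 * av * bv)
      (C (2 * av * bv - 18) + C (12 * av - 4 * bv ^ 2) * X)
    rw [hB₀, hf]
    simp only [map_add, map_mul, map_sub, map_pow, map_neg, map_ofNat, map_one]
    ring

end
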